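/- For all natural numbers k and n and every complex number x, the k-th derivative of the function z ↦ (sin z)^n, evaluated at x, equals ((-1)^n / 2^n) · Σ_{r=0}^{n} (-1)^r · C(n,r) · (2r − n)^k · i^(k−n) · exp(i·(2r − n)·x), where C(n,r) is the binomial coefficient and i^(k−n) is the integer power of the imaginary unit. -/

import Mathlib

open Complex Finset

lemma iteratedDeriv_sum' {ι : Type*} (s : Finset ι) (f : ι → ℂ → ℂ) (k : ℕ)
    (h : ∀ i ∈ s, ContDiff ℂ k (f i)) (x : ℂ) :
    iteratedDeriv k (fun z => ∑ i ∈ s, f i z) x = ∑ i ∈ s, iteratedDeriv k (f i) x := by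
  simp only [iteratedDeriv, iteratedFDeriv_sum h, ContinuousMultilinearMap.sum_apply,
    Finset.sum_apply]

lemma sin_pow_eq (n : ℕ) (z : ℂ) :
    Complex.sin z ^ n =
      ∑ r ∈ Finset.range (n + 1),
        (((-1 : ℂ) ^ n / 2 ^ n) * ((-1 : ℂ) ^ r * (n.choose r : ℂ) *
          Complex.I ^ (-(n : ℤ)))) * Complex.exp (Complex.I * (2 * (r : ℂ) - (n : ℂ)) * z) := by
  have hsin : Complex.sin z = (Complex.exp (z * I) - Complex.exp (-z * I)) / (2 * I) := by
    rw [Complex.sin]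
    field_simp
    linear_combination (Complex.exp (-(z * I)) - Complex.exp (z * I)) * I_sq
  rw [hsin, div_pow, sub_pow, Finset.sum_div]
  apply Finset.sum_congr rfl
  intro r hr
  simp only [Finset.mem_range, Nat.lt_succ_iff] at hr
  have hnr : ((n - r : ℕ) : ℂ) = (n : ℂ) - (r : ℂ) := by
    have h' : ((n - r : ℕ) : ℂ) + (r : ℂ) = (n : ℂ) := by
      rw [← Nat.cast_add, Nat.sub_add_cancel hr]
    linear_combination h'
  have hexp : Complex.exp (z * I) ^ r * Complex.exp (-(z * I)) ^ (n - r) =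
      Complex.exp (Complex.I * (2 * (r : ℂ) - (n : ℂ)) * z) := by
    rw [← Complex.exp_nat_mul, ← Complex.exp_nat_mul, ← Complex.exp_add]
    congr 1
    linear_combination (-(z * I)) * hnr
  have h2 : (2 : ℂ) ^ n ≠ 0 := pow_ne_zero _ two_ne_zero
  have hI : (I : ℂ) ^ n ≠ 0 := pow_ne_zero _ I_ne_zero
  have hIn : (I : ℂ) ^ (-(n : ℤ)) = (I ^ n)⁻¹ := by
    rw [zpow_neg, zpow_natCast]
  rw [hIn, pow_add, mul_pow]
  field_simp
  rw [show z * I * (2 * (r : ℂ) - (n : ℂ)) = I * (2 * (r : ℂ) - (n : ℂ)) * z by ring]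
  linear_combination (n.choose r : ℂ) * hexp

theorem iteratedDeriv_sin_pow (k n : ℕ) (x : ℂ) :
    iteratedDeriv k (fun z : ℂ => Complex.sin z ^ n) x =
      ((-1 : ℂ) ^ n / 2 ^ n) *
        ∑ r ∈ Finset.range (n + 1),
          (-1 : ℂ) ^ r * (n.choose r : ℂ) * (2 * (r : ℂ) - (n : ℂ)) ^ k *
            Complex.I ^ ((k : ℤ) - (n : ℤ)) *
            Complex.exp (Complex.I * (2 * (r : ℂ) - (n : ℂ)) * x) := by
  have hfun : (fun z : ℂ => Complex.sin z ^ n) =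
      fun z => ∑ r ∈ Finset.range (n + 1),
        (((-1 : ℂ) ^ n / 2 ^ n) * ((-1 : ℂ) ^ r * (n.choose r : ℂ) *
          Complex.I ^ (-(n : ℤ)))) * Complex.exp (Complex.I * (2 * (r : ℂ) - (n : ℂ)) * z) := by
    funext z; exact sin_pow_eq n z
  have hcd : ∀ r : ℕ, ContDiff ℂ (k : ℕ∞) fun z : ℂ =>
      Complex.exp (Complex.I * (2 * (r : ℂ) - (n : ℂ)) * z) :=
    fun r => ((contDiff_const.mul contDiff_id).cexp)
  rw [hfun, iteratedDeriv_sum']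
  · rw [Finset.mul_sum]
    apply Finset.sum_congr rfl
    intro r _
    rw [← iteratedDerivWithin_univ,
      iteratedDerivWithin_const_mul (Set.mem_univ x) uniqueDiffOn_univ _ (hcd r).contDiffWithinAt,
      iteratedDerivWithin_univ, iteratedDeriv_cexp_const_mul]
    have hzp : Complex.I ^ ((k : ℤ) - (n : ℤ)) = I ^ k * (I ^ n)⁻¹ := by
      rw [zpow_sub₀ I_ne_zero, zpow_natCast, zpow_natCast, div_eq_mul_inv]
    have hIn : (I : ℂ) ^ (-(n : ℤ)) = (I ^ n)⁻¹ := by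
      rw [zpow_neg, zpow_natCast]
    rw [hzp, hIn, mul_pow]
    ring
  · intro i _
    exact contDiff_const.mul (hcd i)
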